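/- (Sewing lemma for semigroup functionals, uniqueness part.) Let $W$ be a Banach space with a strongly continuous contraction semigroup $(S_t)$, and define the operators $\delta, \phi$ and $\hat\delta = \delta - \phi$ on the spaces $D_k$ of linear maps from $W$ to $C(\Delta_k,\mathbb{R})$ as in the paper. If $Q \in D_2$ satisfies $\hat\delta Q = 0$ and $Q \in D_2^\gamma$ for some $\gamma > 1$ (i.e. $|[Qf]_{ts}| \le \|Q\|_{D_2^\gamma}\|f\|_W |t-s|^\gamma$ for all $f$), then $Q = 0$. -/

import Mathlib

/-- Uniqueness part of the sewing lemma for semigroup functionals: if `Q ∈ D₂`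
satisfies `δ̂Q = 0` (with `δ̂ = δ - φ`, `[φQf]_{tus} = [Q(S_{t-u} - Id)f]_{us}`)
and `Q ∈ D₂^γ` for some `γ > 1`, then `Q = 0`. -/
theorem stmt7 {W : Type*} [NormedAddCommGroup W] [NormedSpace ℝ W]
    (T : ℝ) (hT : 0 < T)
    (S : ℝ → W →L[ℝ] W)
    (hS0 : S 0 = ContinuousLinearMap.id ℝ W)
    (hSadd : ∀ u v : ℝ, 0 ≤ u → 0 ≤ v → (S u).comp (S v) = S (u + v))
    (hScontr : ∀ t : ℝ, 0 ≤ t → ∀ f : W, ‖S t f‖ ≤ ‖f‖)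
    (Q : W → ℝ → ℝ → ℝ)
    (hQlin : ∀ t s : ℝ, IsLinearMap ℝ fun f => Q f t s)
    (γ K : ℝ) (hγ : 1 < γ) (hK : 0 ≤ K)
    (hQγ : ∀ (f : W) (s t : ℝ), 0 ≤ s → s ≤ t → t ≤ T →
      |Q f t s| ≤ K * ‖f‖ * (t - s) ^ γ)
    (hQcocycle : ∀ (f : W) (s u t : ℝ), 0 ≤ s → s ≤ u → u ≤ t → t ≤ T →
      Q f t s - Q f t u - Q f u s - Q (S (t - u) f - f) u s = 0) :
    ∀ (f : W) (s t : ℝ), 0 ≤ s → s ≤ t → t ≤ T → Q f t s = 0 := by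
  have key : ∀ n : ℕ, ∀ f : W, ∀ s t : ℝ, 0 ≤ s → s ≤ t → t ≤ T →
      |Q f t s| ≤ K * ‖f‖ * ((t - s) / 2 ^ n) ^ γ * 2 ^ n := by
    intro n
    induction n with
    | zero =>
      intro f s t hs hst htT
      simpa using hQγ f s t hs hst htT
    | succ n ih =>
      intro f s t hs hst htT
      set m := (s + t) / 2 with hm
      have hsm : s ≤ m := by rw [hm]; linarith
      have hmt : m ≤ t := by rw [hm]; linarith
      have hm0 : 0 ≤ m := le_trans hs hsm
      have hmT : m ≤ T := le_trans hmt htT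
      have htm : t - m = (t - s) / 2 := by rw [hm]; ring
      have hms : m - s = (t - s) / 2 := by rw [hm]; ring
      have hdec : Q f t s = Q f t m + Q (S (t - m) f) m s := by
        have h := hQcocycle f s m t hs hsm hmt htT
        have hlin := (hQlin m s).map_sub (x := S (t - m) f) (y := f)
        rw [hlin] at h
        linarith
      have h1 := ih f m t hm0 hmt htT
      have h2 := ih (S (t - m) f) s m hs hsm hmT
      have hcontr : ‖S (t - m) f‖ ≤ ‖f‖ := hScontr (t - m) (by linarith) f
      have hpow : ((t - s) / 2 / 2 ^ n) = (t - s) / 2 ^ (n + 1) := by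
        rw [pow_succ]; ring
      rw [htm, hpow] at h1
      rw [hms, hpow] at h2
      have hge : (0:ℝ) ≤ ((t - s) / 2 ^ (n+1)) ^ γ * 2 ^ n :=
        mul_nonneg (Real.rpow_nonneg (div_nonneg (by linarith) (by positivity)) γ) (by positivity)
      have h2' : |Q (S (t - m) f) m s| ≤ K * ‖f‖ * ((t - s) / 2 ^ (n+1)) ^ γ * 2 ^ n := by
        calc |Q (S (t - m) f) m s| ≤ K * ‖S (t - m) f‖ * ((t - s) / 2 ^ (n+1)) ^ γ * 2 ^ n := h2
          _ ≤ K * ‖f‖ * ((t - s) / 2 ^ (n+1)) ^ γ * 2 ^ n := by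
              have := mul_le_mul_of_nonneg_left hcontr hK
              nlinarith [hge]
      rw [hdec]
      calc |Q f t m + Q (S (t - m) f) m s| ≤ |Q f t m| + |Q (S (t - m) f) m s| := abs_add_le _ _
        _ ≤ K * ‖f‖ * ((t - s) / 2 ^ (n+1)) ^ γ * 2 ^ n
            + K * ‖f‖ * ((t - s) / 2 ^ (n+1)) ^ γ * 2 ^ n := add_le_add h1 h2'
        _ = K * ‖f‖ * ((t - s) / 2 ^ (n+1)) ^ γ * 2 ^ (n+1) := by rw [pow_succ]; ring
  intro f s t hs hst htT
  have hts : 0 ≤ t - s := by linarith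
  set r : ℝ := (2:ℝ) ^ (1 - γ) with hr
  have hr0 : 0 < r := Real.rpow_pos_of_pos (by norm_num) _
  have hr1 : r < 1 := Real.rpow_lt_one_of_one_lt_of_neg (by norm_num) (by linarith)
  have heq : ∀ n : ℕ, K * ‖f‖ * ((t - s) / 2 ^ n) ^ γ * 2 ^ n
      = (K * ‖f‖ * (t - s) ^ γ) * r ^ n := by
    intro n
    have h2n : (0:ℝ) < 2 ^ n := by positivity
    rw [Real.div_rpow hts (le_of_lt h2n)]
    rw [hr, ← Real.rpow_natCast ((2:ℝ) ^ (1 - γ)) n, ← Real.rpow_mul (by norm_num : (0:ℝ) ≤ 2)]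
    rw [← Real.rpow_natCast (2:ℝ) n, ← Real.rpow_mul (by norm_num : (0:ℝ) ≤ 2)]
    rw [div_eq_mul_inv, ← Real.rpow_neg (by norm_num : (0:ℝ) ≤ 2)]
    rw [show ((1 - γ) * (n:ℝ)) = -((n:ℝ) * γ) + (n:ℝ) from by ring,
      Real.rpow_add (by norm_num : (0:ℝ) < 2)]
    ring
  have hbound : ∀ n : ℕ, |Q f t s| ≤ (K * ‖f‖ * (t - s) ^ γ) * r ^ n := by
    intro n
    rw [← heq n]
    exact key n f s t hs hst htT
  have htend : Filter.Tendsto (fun n : ℕ => (K * ‖f‖ * (t - s) ^ γ) * r ^ n)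
      Filter.atTop (nhds 0) := by
    have := tendsto_pow_atTop_nhds_zero_of_lt_one (le_of_lt hr0) hr1
    simpa using this.const_mul (K * ‖f‖ * (t - s) ^ γ)
  have : |Q f t s| ≤ 0 := ge_of_tendsto' htend hbound
  exact abs_eq_zero.mp (le_antisymm this (abs_nonneg _))
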